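/- Let B be a finite group which is an extension of a finite abelian group C by a finite abelian normal subgroup A. Then every irreducible complex representation of B restricts to A with all irreducible constituents appearing with multiplicity 1 if and only if the extension has trivial commutator, i.e., for all c₁, c₂ ∈ C the commutator f(c₁,c₂) = s(c₁)s(c₂)s(c₁)⁻¹s(c₂)⁻¹ of lifts vanishes in the coinvariant group A_{⟨c₁,c₂⟩}. -/

import Mathlib

open Module

/-- The `χ`-isotypic subspace for the restriction of `π` to the abelian subgroup `A`:
the space of vectors on which `A` acts through the character `χ`. -/
def charEigenspace {B : Type} [Group B] {V : Type} [AddCommGroup V] [Module ℂ V]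
    (π : Representation ℂ B V) (A : Subgroup B) (χ : A →* ℂˣ) : Submodule ℂ V where
  carrier := {v | ∀ a : A, π a v = (χ a : ℂ) • v}
  add_mem' := by
    intro x y hx hy a
    simp only [map_add, hx a, hy a, smul_add]
  zero_mem' := by intro a; simp
  smul_mem' := by
    intro c x hx a
    simp only [map_smul, hx a]
    rw [smul_comm]

/-- A representation is irreducible if the space is nonzero and the only invariant
submodules are `⊥` and `⊤`. -/
def IsIrred {G : Type} [Group G] {V : Type} [AddCommGroup V] [Module ℂ V]
    (ρ : Representation ℂ G V) : Prop :=
  Nontrivial V ∧ ∀ W : Submodule ℂ V, (∀ g : G, W.map (ρ g) ≤ W) → W = ⊥ ∨ W = ⊤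

/-- The subgroup of `A`-differences measuring coinvariants: the subgroup of `B` generated
by the elements `a * (γ·a)⁻¹` for `a ∈ A` and `γ` ranging over (lifts to `B` of) the
subgroup of `B ⧸ A` generated by `c₁` and `c₂`, acting by conjugation. -/
def coinvariantDifferences {B : Type} [Group B] (A : Subgroup B) [A.Normal]
    (c₁ c₂ : B ⧸ A) : Subgroup B :=
  Subgroup.closure
    {x : B | ∃ a b : B, a ∈ A ∧
      (QuotientGroup.mk b : B ⧸ A) ∈ Subgroup.closure {c₁, c₂} ∧
      x = a * (b * a * b⁻¹)⁻¹}

-- ==== auxiliary development ====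

section Aux

variable {B : Type} [Group B] {A : Subgroup B} [nA : A.Normal]

lemma conj_mem' (a : A) (b : B) : b⁻¹ * (a : B) * b ∈ A := by
  simpa using nA.conj_mem a a.2 b⁻¹

/-- conjugate character -/
def conjChar (χ : A →* ℂˣ) (b : B) : A →* ℂˣ where
  toFun a := χ ⟨b⁻¹ * a * b, conj_mem' a b⟩
  map_one' := by
    have h : (⟨b⁻¹ * ((1 : A) : B) * b, conj_mem' 1 b⟩ : A) = 1 := by
      ext; simp
    show χ ⟨b⁻¹ * ((1 : A) : B) * b, conj_mem' 1 b⟩ = 1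
    rw [h, map_one]
  map_mul' a a' := by
    have e : (⟨b⁻¹ * ↑(a * a') * b, conj_mem' (a * a') b⟩ : A)
        = ⟨b⁻¹ * ↑a * b, conj_mem' a b⟩ * ⟨b⁻¹ * ↑a' * b, conj_mem' a' b⟩ := by
      ext; show b⁻¹ * (↑a * ↑a') * b = (b⁻¹ * ↑a * b) * (b⁻¹ * ↑a' * b); group
    show χ ⟨b⁻¹ * ↑(a * a') * b, conj_mem' (a * a') b⟩ = _
    rw [e, map_mul]

/-- subgroup of elements whose conjugation fixes χ -/
def fixSubgroup (χ : A →* ℂˣ) : Subgroup B where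
  carrier := {b : B | ∀ a : A, χ ⟨b⁻¹ * a * b, conj_mem' a b⟩ = χ a}
  one_mem' := by
    intro a
    have : (⟨(1:B)⁻¹ * a * 1, conj_mem' a 1⟩ : A) = a := by ext; simp
    rw [this]
  mul_mem' := by
    intro b c hb hc a
    have e : (⟨(b*c)⁻¹ * a * (b*c), conj_mem' a (b*c)⟩ : A)
        = ⟨c⁻¹ * ((⟨b⁻¹ * a * b, conj_mem' a b⟩ : A) : B) * c, conj_mem' _ c⟩ := by
      ext; show (b*c)⁻¹ * ↑a * (b*c) = c⁻¹ * (b⁻¹ * ↑a * b) * c; group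
    rw [e, hc, hb]
  inv_mem' := by
    intro b hb a
    have ha' : b * ↑a * b⁻¹ ∈ A := by simpa using nA.conj_mem a a.2 b
    set a' : A := ⟨b * ↑a * b⁻¹, ha'⟩ with ha'def
    have key : χ ⟨b⁻¹ * ↑a' * b, conj_mem' a' b⟩ = χ a' := hb a'
    have e1 : χ (⟨b⁻¹ * ↑a' * b, conj_mem' a' b⟩ : A) = χ a :=
      congrArg χ (Subtype.ext (by show b⁻¹ * (b * ↑a * b⁻¹) * b = ↑a; group))
    have e2 : χ (⟨(b⁻¹)⁻¹ * ↑a * b⁻¹, conj_mem' a b⁻¹⟩ : A) = χ a' :=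
      congrArg χ (Subtype.ext (by show (b⁻¹)⁻¹ * ↑a * b⁻¹ = b * ↑a * b⁻¹; group))
    exact e2.trans (key.symm.trans e1)

lemma conjChar_apply (χ : A →* ℂˣ) (b : B) (a : A) :
    conjChar χ b a = χ ⟨b⁻¹ * a * b, conj_mem' a b⟩ := rfl

lemma fixSubgroup_iff_conjChar {χ : A →* ℂˣ} {b : B} :
    b ∈ fixSubgroup χ ↔ conjChar χ b = χ := by
  constructor
  · intro h; exact MonoidHom.ext h
  · intro h a; exact DFunLike.congr_fun h a

lemma sum_char_eq_zero {G : Type} [Group G] [Fintype G] {ψ : G →* ℂˣ} (h : ψ ≠ 1) :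
    ∑ g : G, ((ψ g : ℂˣ) : ℂ) = 0 := by
  obtain ⟨g₀, hg₀⟩ : ∃ g, ψ g ≠ 1 := by
    by_contra h'; push_neg at h'
    exact h (MonoidHom.ext fun g => h' g)
  have key : ((ψ g₀ : ℂˣ) : ℂ) * ∑ g : G, ((ψ g : ℂˣ) : ℂ) = ∑ g : G, ((ψ g : ℂˣ) : ℂ) := by
    rw [Finset.mul_sum]
    exact Fintype.sum_bijective (g₀ * ·) (Group.mulLeft_bijective g₀) _ _
      (fun g => by rw [map_mul]; push_cast; ring)
  have h2 : (((ψ g₀ : ℂˣ) : ℂ) - 1) * ∑ g : G, ((ψ g : ℂˣ) : ℂ) = 0 := by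
    rw [sub_mul, key]; ring
  rcases mul_eq_zero.mp h2 with h' | h'
  · exact absurd (Units.ext (by simpa using sub_eq_zero.mp h')) hg₀
  · exact h'

variable {V : Type} [AddCommGroup V] [Module ℂ V] (π : Representation ℂ B V)

lemma mem_charEigenspace_iff {χ : A →* ℂˣ} {v : V} :
    v ∈ charEigenspace π A χ ↔ ∀ a : A, π a v = (χ a : ℂ) • v := Iff.rfl

lemma charEigenspace_map (χ : A →* ℂˣ) (b : B) {v : V} (hv : v ∈ charEigenspace π A χ) :
    π b v ∈ charEigenspace π A (conjChar χ b) := by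
  intro a
  have h1 : (↑a : B) * b = b * (b⁻¹ * ↑a * b) := by group
  calc π ↑a (π b v) = π ((↑a : B) * b) v := by rw [map_mul]; rfl
    _ = π b (π (b⁻¹ * ↑a * b) v) := by rw [h1, map_mul]; rfl
    _ = π b ((χ ⟨b⁻¹ * ↑a * b, conj_mem' a b⟩ : ℂ) • v) := by
        rw [hv ⟨b⁻¹ * ↑a * b, conj_mem' a b⟩]
    _ = (conjChar χ b a : ℂ) • π b v := by rw [map_smul, conjChar_apply]

/-- averaging projection onto the `χ`-eigenspace -/
noncomputable def Pchi [Fintype A] (χ : A →* ℂˣ) : V →ₗ[ℂ] V :=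
  (Fintype.card A : ℂ)⁻¹ • ∑ a : A, (((χ a : ℂˣ) : ℂ)⁻¹ • (π ↑a : V →ₗ[ℂ] V))

lemma Pchi_apply_of_mem [Fintype A] {χ : A →* ℂˣ} {v : V}
    (hv : v ∈ charEigenspace π A χ) : Pchi π χ v = v := by
  have hcard : ((Fintype.card A : ℂ)) ≠ 0 := Nat.cast_ne_zero.mpr Fintype.card_ne_zero
  unfold Pchi
  rw [LinearMap.smul_apply, LinearMap.sum_apply]
  have h1 : ∀ a : A, (((χ a : ℂˣ) : ℂ)⁻¹ • (π ↑a : V →ₗ[ℂ] V)) v = v := fun a => by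
    rw [LinearMap.smul_apply, hv a, smul_smul,
      inv_mul_cancel₀ (Units.ne_zero (χ a)), one_smul]
  rw [Finset.sum_congr rfl (fun a _ => h1 a), Finset.sum_const, Finset.card_univ]
  rw [← Nat.cast_smul_eq_nsmul ℂ, smul_smul, inv_mul_cancel₀ hcard, one_smul]

lemma Pchi_apply_of_mem_ne [Fintype A] {χ ψ : A →* ℂˣ} (hne : ψ ≠ χ) {v : V}
    (hv : v ∈ charEigenspace π A ψ) : Pchi π χ v = 0 := by
  unfold Pchi
  rw [LinearMap.smul_apply, LinearMap.sum_apply]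
  have h1 : ∀ a : A, (((χ a : ℂˣ) : ℂ)⁻¹ • (π ↑a : V →ₗ[ℂ] V)) v
      = (((χ⁻¹ * ψ) a : ℂˣ) : ℂ) • v := fun a => by
    rw [LinearMap.smul_apply, hv a, smul_smul]
    simp [Units.val_mul, Units.val_inv_eq_inv_val]
  rw [Finset.sum_congr rfl (fun a _ => h1 a), ← Finset.sum_smul,
    sum_char_eq_zero (fun h => hne ((inv_mul_eq_one.mp h).symm)), zero_smul, smul_zero]


lemma mult_le_one_of_star [Finite B]
    (hStar : ∀ (χ : A →* ℂˣ) (b₁ b₂ : B), b₁ ∈ fixSubgroup χ → b₂ ∈ fixSubgroup χ →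
      ∀ h : b₁ * b₂ * b₁⁻¹ * b₂⁻¹ ∈ A, χ ⟨b₁ * b₂ * b₁⁻¹ * b₂⁻¹, h⟩ = 1)
    (hC : ∀ x y : B, x * y * x⁻¹ * y⁻¹ ∈ A)
    {V : Type} [AddCommGroup V] [Module ℂ V] [FiniteDimensional ℂ V]
    (π : Representation ℂ B V) (hπ : IsIrred π) (χ : A →* ℂˣ) :
    finrank ℂ (charEigenspace π A χ) ≤ 1 := by
  haveI : Fintype ↥A := Fintype.ofFinite _
  by_contra hrank
  push_neg at hrank
  set W : Submodule ℂ V := charEigenspace π A χ with hW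
  have hWinv : ∀ b : B, b ∈ fixSubgroup χ → ∀ v ∈ W, π b v ∈ W := by
    intro b hb v hv
    have h2 := charEigenspace_map π χ b hv
    rwa [fixSubgroup_iff_conjChar.mp hb] at h2
  let T : ∀ b ∈ fixSubgroup χ, (↥W →ₗ[ℂ] ↥W) := fun b hb => (π b).restrict (hWinv b hb)
  have hcomm : ∀ b₁ (hb₁ : b₁ ∈ fixSubgroup χ) b₂ (hb₂ : b₂ ∈ fixSubgroup χ) (w : ↥W),
      π b₁ (π b₂ (w : V)) = π b₂ (π b₁ (w : V)) := by
    intro b₁ hb₁ b₂ hb₂ w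
    have hk := hC b₁ b₂
    have hkey : b₁ * b₂ = (b₁ * b₂ * b₁⁻¹ * b₂⁻¹) * (b₂ * b₁) := by group
    have h1 : π b₁ (π b₂ (w : V)) = π (b₁ * b₂) (w : V) := by rw [map_mul]; rfl
    have h2 : π b₂ (π b₁ (w : V)) = π (b₂ * b₁) (w : V) := by rw [map_mul]; rfl
    have hmem : π (b₂ * b₁) (w : V) ∈ W := by
      have h3 := hWinv b₂ hb₂ _ (hWinv b₁ hb₁ _ w.2)
      rwa [h2] at h3
    rw [h1, h2, hkey, map_mul]
    show π ((⟨b₁ * b₂ * b₁⁻¹ * b₂⁻¹, hk⟩ : A) : B) (π (b₂ * b₁) (w : V)) = π (b₂ * b₁) (w : V)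
    rw [hmem ⟨b₁ * b₂ * b₁⁻¹ * b₂⁻¹, hk⟩, hStar χ b₁ b₂ hb₁ hb₂ hk]
    simp
  haveI : Nontrivial ↥W := by
    have h0 : 0 < finrank ℂ ↥W := lt_trans zero_lt_one hrank
    exact Module.nontrivial_of_finrank_pos h0
  obtain ⟨W', hW'bot, hW'top, hW'inv⟩ :
      ∃ W' : Submodule ℂ ↥W, W' ≠ ⊥ ∧ W' ≠ ⊤ ∧
        ∀ b (hb : b ∈ fixSubgroup χ), ∀ x ∈ W', T b hb x ∈ W' := by
    by_cases hsc : ∀ b, ∀ hb : b ∈ fixSubgroup χ,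
        ∃ μ : ℂ, T b hb = μ • (LinearMap.id : ↥W →ₗ[ℂ] ↥W)
    · obtain ⟨w₀, hw₀⟩ := exists_ne (0 : ↥W)
      refine ⟨Submodule.span ℂ {w₀}, by simpa using hw₀, ?_, ?_⟩
      · intro htop
        have h1 : finrank ℂ (Submodule.span ℂ {w₀}) = 1 := finrank_span_singleton hw₀
        rw [htop] at h1
        have h2 : finrank ℂ (⊤ : Submodule ℂ ↥W) = finrank ℂ ↥W := finrank_top ℂ ↥W
        omega
      · intro b hb x hx
        obtain ⟨μ, hμ⟩ := hsc b hb
        rw [hμ]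
        exact Submodule.smul_mem _ μ hx
    · push_neg at hsc
      obtain ⟨b₀, hb₀, hns⟩ := hsc
      obtain ⟨μ, hμ⟩ := Module.End.exists_eigenvalue (T b₀ hb₀)
      refine ⟨Module.End.eigenspace (T b₀ hb₀) μ, hμ, ?_, ?_⟩
      · intro htop
        apply hns μ
        refine LinearMap.ext fun x => ?_
        have hx : x ∈ Module.End.eigenspace (T b₀ hb₀) μ := htop ▸ Submodule.mem_top
        have h4 := Module.End.mem_eigenspace_iff.mp hx
        simpa using h4
      · intro b hb x hx
        rw [Module.End.mem_eigenspace_iff] at hx ⊢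
        have hc : T b₀ hb₀ (T b hb x) = T b hb (T b₀ hb₀ x) :=
          Subtype.ext (hcomm b₀ hb₀ b hb x)
        rw [hc, hx, map_smul]
  let Wv : Submodule ℂ V := W'.map W.subtype
  have hWvW : Wv ≤ W := Submodule.map_subtype_le W W'
  have hWvne : Wv ≠ ⊥ := by
    obtain ⟨x, hx, hx0⟩ := (Submodule.ne_bot_iff W').mp hW'bot
    exact (Submodule.ne_bot_iff Wv).mpr ⟨↑x, ⟨x, hx, rfl⟩, by simpa using hx0⟩
  obtain ⟨y, hyW, hyWv⟩ : ∃ y, y ∈ W ∧ y ∉ Wv := by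
    have hex : ∃ x : ↥W, x ∉ W' := by
      by_contra h; push_neg at h; exact hW'top (Submodule.eq_top_iff'.mpr h)
    obtain ⟨x, hx⟩ := hex
    refine ⟨↑x, x.2, fun hmem => hx ?_⟩
    obtain ⟨z, hz, hze⟩ := hmem
    rwa [show z = x from Subtype.ext hze] at hz
  have hWvinv : ∀ b, ∀ hb : b ∈ fixSubgroup χ, ∀ v ∈ Wv, π b v ∈ Wv := by
    rintro b hb v ⟨x, hx, rfl⟩
    exact ⟨T b hb x, hW'inv b hb x hx, rfl⟩
  let U : Submodule ℂ V := ⨆ b : B, Wv.map (π b)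
  have hUinv : ∀ g : B, U.map (π g) ≤ U := by
    intro g
    rw [Submodule.map_iSup]
    apply iSup_le
    intro b
    rw [← Submodule.map_comp]
    have hcomp : (π g).comp (π b) = π (g * b) := by rw [map_mul]; rfl
    rw [hcomp]
    exact le_iSup (fun b => Wv.map (π b)) (g * b)
  have hUne : U ≠ ⊥ := by
    intro h
    apply hWvne
    have h1 : Wv.map (π 1) ≤ U := le_iSup (fun b : B => Wv.map (π b)) 1
    rw [map_one π, show (1 : V →ₗ[ℂ] V) = LinearMap.id from rfl, Submodule.map_id, h] at h1
    exact le_bot_iff.mp h1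
  have hU : U = ⊤ := (hπ.2 U hUinv).resolve_left hUne
  have hPU : ∀ v ∈ U, Pchi π χ v ∈ Wv := by
    intro v hv
    have hle : U.map (Pchi π χ) ≤ Wv := by
      rw [Submodule.map_iSup]
      apply iSup_le
      intro b
      rw [← Submodule.map_comp]
      rintro x ⟨w', hw', rfl⟩
      show Pchi π χ (π b w') ∈ Wv
      by_cases hb : b ∈ fixSubgroup χ
      · rw [Pchi_apply_of_mem π (hWvW (hWvinv b hb w' hw'))]
        exact hWvinv b hb w' hw'
      · rw [Pchi_apply_of_mem_ne π (fun h => hb (fixSubgroup_iff_conjChar.mpr h))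
          (charEigenspace_map π χ b (hWvW hw'))]
        exact Wv.zero_mem
    exact hle (Submodule.mem_map_of_mem hv)
  have hfin : Pchi π χ y ∈ Wv := hPU y (hU ▸ Submodule.mem_top)
  rw [Pchi_apply_of_mem π hyW] at hfin
  exact hyWv hfin

lemma A_le_fixSubgroup (hA : ∀ x ∈ A, ∀ y ∈ A, x * y = y * x) (χ : A →* ℂˣ) :
    A ≤ fixSubgroup χ := by
  intro b hb a
  refine congrArg χ (Subtype.ext ?_)
  show b⁻¹ * ↑a * b = ↑a
  have h1 : (↑a : B) * b = b * ↑a := hA ↑a a.2 b hb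
  calc b⁻¹ * ↑a * b = b⁻¹ * (↑a * b) := by group
    _ = b⁻¹ * (b * ↑a) := by rw [h1]
    _ = ↑a := by group

lemma fix_conj (χ : A →* ℂˣ) {b : B} (hb : b ∈ fixSubgroup χ) (a : A)
    (h : b * ↑a * b⁻¹ ∈ A) : χ ⟨b * ↑a * b⁻¹, h⟩ = χ a := by
  have hbinv : b⁻¹ ∈ fixSubgroup χ := (fixSubgroup χ).inv_mem hb
  have h2 := hbinv a
  calc χ ⟨b * ↑a * b⁻¹, h⟩ = χ ⟨(b⁻¹)⁻¹ * ↑a * b⁻¹, conj_mem' a b⁻¹⟩ :=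
      congrArg χ (Subtype.ext (by show b * ↑a * b⁻¹ = (b⁻¹)⁻¹ * ↑a * b⁻¹; group))
    _ = χ a := h2

/-- restriction of a representation to an invariant submodule -/
def subRep (π : Representation ℂ B V) (W : Submodule ℂ V)
    (h : ∀ g : B, W.map (π g) ≤ W) : Representation ℂ B ↥W where
  toFun b := (π b).restrict (fun v hv => h b (Submodule.mem_map_of_mem hv))
  map_one' := by
    refine LinearMap.ext fun x => Subtype.ext ?_
    show π 1 (x : V) = (x : V)
    rw [map_one]; rfl
  map_mul' g g' := by
    refine LinearMap.ext fun x => Subtype.ext ?_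
    show π (g * g') (x : V) = π g (π g' (x : V))
    rw [map_mul]; rfl

/-- quotient representation -/
def quotRep (π : Representation ℂ B V) (W : Submodule ℂ V)
    (h : ∀ g : B, W.map (π g) ≤ W) : Representation ℂ B (V ⧸ W) where
  toFun b := Submodule.mapQ W W (π b) (fun v hv => h b ⟨v, hv, rfl⟩)
  map_one' := by
    refine Submodule.linearMap_qext _ ?_
    refine LinearMap.ext fun v => ?_
    simp [Submodule.mapQ_apply]
  map_mul' g g' := by
    refine Submodule.linearMap_qext _ ?_
    refine LinearMap.ext fun v => ?_
    simp [Submodule.mapQ_apply, Module.End.mul_apply, map_mul]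

end Aux

/-- the left regular representation on functions -/
def regRep (B : Type) [Group B] : Representation ℂ B (B → ℂ) where
  toFun b :=
    { toFun := fun f x => f (b⁻¹ * x)
      map_add' := fun f g => rfl
      map_smul' := fun c f => rfl }
  map_one' := LinearMap.ext fun f => funext fun x => by simp
  map_mul' g g' := LinearMap.ext fun f => funext fun x => by
    show f ((g * g')⁻¹ * x) = f (g'⁻¹ * (g⁻¹ * x))
    rw [mul_inv_rev, mul_assoc]

section Aux2

variable {B : Type} [Group B] {A : Subgroup B} [nA : A.Normal]

lemma star_of_mult [Finite B]
    (hL : ∀ (V : Type) (_ : AddCommGroup V) (_ : Module ℂ V) (_ : FiniteDimensional ℂ V)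
        (π : Representation ℂ B V), IsIrred π →
        ∀ χ : A →* ℂˣ, finrank ℂ (charEigenspace π A χ) ≤ 1) :
    ∀ (χ : A →* ℂˣ) (b₁ b₂ : B), b₁ ∈ fixSubgroup χ → b₂ ∈ fixSubgroup χ →
      ∀ h : b₁ * b₂ * b₁⁻¹ * b₂⁻¹ ∈ A, χ ⟨b₁ * b₂ * b₁⁻¹ * b₂⁻¹, h⟩ = 1 := by
  intro χ b₁ b₂ hb₁ hb₂ hk
  have key : ∀ n : ℕ, ∀ (V : Type) [AddCommGroup V] [Module ℂ V] [FiniteDimensional ℂ V]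
      (π : Representation ℂ B V), finrank ℂ V ≤ n → charEigenspace π A χ ≠ ⊥ →
      χ ⟨b₁ * b₂ * b₁⁻¹ * b₂⁻¹, hk⟩ = 1 := by
    intro n
    induction n with
    | zero =>
      intro V _ _ _ π hdim hne
      exfalso
      obtain ⟨v, hv, hv0⟩ := (Submodule.ne_bot_iff _).mp hne
      have hss : Subsingleton V :=
        Module.finrank_zero_iff.mp (Nat.le_zero.mp hdim)
      exact hv0 (Subsingleton.elim v 0)
    | succ n ih =>
      intro V _ _ _ π hdim hne
      obtain ⟨v, hv, hv0⟩ := (Submodule.ne_bot_iff _).mp hne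
      by_cases hirr : IsIrred π
      · have hr := hL V inferInstance inferInstance inferInstance π hirr χ
        have hsp : Submodule.span ℂ {v} = charEigenspace π A χ := by
          apply Submodule.eq_of_le_of_finrank_le
          · exact Submodule.span_le.mpr (by simpa using hv)
          · calc finrank ℂ (charEigenspace π A χ) ≤ 1 := hr
              _ = finrank ℂ (Submodule.span ℂ {v}) := (finrank_span_singleton hv0).symm
        have hbmem : ∀ b, b ∈ fixSubgroup χ → π b v ∈ Submodule.span ℂ {v} := by
          intro b hb
          rw [hsp]
          have h2 := charEigenspace_map π χ b hv
          rwa [fixSubgroup_iff_conjChar.mp hb] at h2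
        obtain ⟨μ₁, hμ₁⟩ := Submodule.mem_span_singleton.mp (hbmem b₁ hb₁)
        obtain ⟨μ₂, hμ₂⟩ := Submodule.mem_span_singleton.mp (hbmem b₂ hb₂)
        have hμ0 : ∀ (b : B) (μ : ℂ), μ • v = π b v → μ ≠ 0 := by
          intro b μ hμ h0
          rw [h0, zero_smul] at hμ
          apply hv0
          have h3 : π (b⁻¹ * b) v = v := by rw [inv_mul_cancel, map_one]; rfl
          rw [map_mul] at h3
          rw [← h3, Module.End.mul_apply, ← hμ, map_zero]
        have hμ₁0 : μ₁ ≠ 0 := hμ0 b₁ μ₁ hμ₁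
        have hμ₂0 : μ₂ ≠ 0 := hμ0 b₂ μ₂ hμ₂
        set c : ℂ := ((χ ⟨b₁ * b₂ * b₁⁻¹ * b₂⁻¹, hk⟩ : ℂˣ) : ℂ) with hc
        have e1 : π (b₁ * b₂) v = (μ₂ * μ₁) • v := by
          rw [map_mul, Module.End.mul_apply, ← hμ₂, map_smul, ← hμ₁, smul_smul]
        have e3 : π (b₂ * b₁) v = (μ₁ * μ₂) • v := by
          rw [map_mul, Module.End.mul_apply, ← hμ₁, map_smul, ← hμ₂, smul_smul]
        have hkey : b₁ * b₂ = (b₁ * b₂ * b₁⁻¹ * b₂⁻¹) * (b₂ * b₁) := by group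
        have e2 : π (b₁ * b₂) v = c • ((μ₁ * μ₂) • v) := by
          rw [hkey, map_mul, Module.End.mul_apply, e3, map_smul]
          show (μ₁ * μ₂) • (π ((⟨b₁ * b₂ * b₁⁻¹ * b₂⁻¹, hk⟩ : A) : B) v) = _
          rw [hv ⟨b₁ * b₂ * b₁⁻¹ * b₂⁻¹, hk⟩, smul_comm]
        have e4 : (μ₂ * μ₁) • v = (c * (μ₁ * μ₂)) • v := by
          rw [← e1, e2, smul_smul]
        have e5 : (μ₂ * μ₁ - c * (μ₁ * μ₂)) • v = 0 := by
          rw [sub_smul, e4, sub_self]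
        have e6 : μ₂ * μ₁ - c * (μ₁ * μ₂) = 0 :=
          (smul_eq_zero.mp e5).resolve_right hv0
        have e7 : c = 1 := by
          have e6' : μ₂ * μ₁ = c * (μ₁ * μ₂) := sub_eq_zero.mp e6
          have h9 : c * (μ₁ * μ₂) = 1 * (μ₁ * μ₂) := by rw [← e6']; ring
          exact mul_right_cancel₀ (mul_ne_zero hμ₁0 hμ₂0) h9
        exact Units.ext (by rw [← hc, e7]; rfl)
      · haveI hNT : Nontrivial V := ⟨v, 0, hv0⟩
        have hnirr : ∃ W₀ : Submodule ℂ V,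
            (∀ g : B, W₀.map (π g) ≤ W₀) ∧ W₀ ≠ ⊥ ∧ W₀ ≠ ⊤ := by
          rw [IsIrred] at hirr
          push_neg at hirr
          obtain ⟨W₀, h1, h2⟩ := hirr hNT
          exact ⟨W₀, h1, h2⟩
        obtain ⟨W₀, hW₀inv, hW₀bot, hW₀top⟩ := hnirr
        by_cases hint : charEigenspace π A χ ⊓ W₀ = ⊥
        · refine ih (V ⧸ W₀) (quotRep π W₀ hW₀inv) ?_ ?_
          · have h5 := Submodule.finrank_quotient_add_finrank W₀
            have h6 : finrank ℂ ↥W₀ ≠ 0 := fun h0 =>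
              hW₀bot (Submodule.finrank_eq_zero.mp h0)
            omega
          · apply (Submodule.ne_bot_iff _).mpr
            refine ⟨Submodule.Quotient.mk v, ?_, ?_⟩
            · intro a
              show Submodule.mapQ W₀ W₀ (π ↑a) (fun v hv => hW₀inv ↑a ⟨v, hv, rfl⟩)
                    (Submodule.Quotient.mk v)
                  = ((χ a : ℂˣ) : ℂ) • Submodule.Quotient.mk v
              rw [Submodule.mapQ_apply, hv a]
              rfl
            · intro h0
              rw [Submodule.Quotient.mk_eq_zero] at h0
              apply hv0
              have h7 : v ∈ charEigenspace π A χ ⊓ W₀ := ⟨hv, h0⟩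
              rw [hint] at h7
              exact h7
        · refine ih ↥W₀ (subRep π W₀ hW₀inv) ?_ ?_
          · have h5 : finrank ℂ ↥W₀ < finrank ℂ V :=
              Submodule.finrank_lt hW₀top
            omega
          · obtain ⟨x, hx, hx0⟩ := (Submodule.ne_bot_iff _).mp hint
            obtain ⟨hxE, hxW⟩ := hx
            apply (Submodule.ne_bot_iff _).mpr
            refine ⟨⟨x, hxW⟩, ?_, ?_⟩
            · intro a
              apply Subtype.ext
              show π ↑a x = ((χ a : ℂˣ) : ℂ) • x
              exact hxE a
            · simpa using hx0
  haveI := Fintype.ofFinite B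
  classical
  let v₀ : B → ℂ := fun x => if h : x ∈ A then (((χ ⟨x, h⟩ : ℂˣ) : ℂ))⁻¹ else 0
  have hv₀mem : v₀ ∈ charEigenspace (regRep B) A χ := by
    intro a
    funext x
    show v₀ ((↑a)⁻¹ * x) = (((χ a : ℂˣ) : ℂ) • v₀) x
    rw [Pi.smul_apply, smul_eq_mul]
    by_cases hx : x ∈ A
    · have hx' : (↑a)⁻¹ * x ∈ A := mul_mem (inv_mem a.2) hx
      show (if h : (↑a)⁻¹ * x ∈ A then (((χ ⟨(↑a)⁻¹ * x, h⟩ : ℂˣ) : ℂ))⁻¹ else 0)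
          = ((χ a : ℂˣ) : ℂ) * (if h : x ∈ A then (((χ ⟨x, h⟩ : ℂˣ) : ℂ))⁻¹ else 0)
      rw [dif_pos hx', dif_pos hx]
      have e : (⟨(↑a)⁻¹ * x, hx'⟩ : A) = a⁻¹ * ⟨x, hx⟩ := rfl
      rw [e, map_mul, map_inv]
      have hne : ((χ ⟨x, hx⟩ : ℂˣ) : ℂ) ≠ 0 := Units.ne_zero _
      have hne2 : ((χ a : ℂˣ) : ℂ) ≠ 0 := Units.ne_zero _
      simp only [Units.val_mul, Units.val_inv_eq_inv_val]
      field_simp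
    · have hx' : (↑a)⁻¹ * x ∉ A := by
        intro h
        apply hx
        have h8 := mul_mem a.2 h
        rwa [show (↑a : B) * ((↑a)⁻¹ * x) = x by group] at h8
      show (if h : (↑a)⁻¹ * x ∈ A then (((χ ⟨(↑a)⁻¹ * x, h⟩ : ℂˣ) : ℂ))⁻¹ else 0)
          = ((χ a : ℂˣ) : ℂ) * (if h : x ∈ A then (((χ ⟨x, h⟩ : ℂˣ) : ℂ))⁻¹ else 0)
      rw [dif_neg hx', dif_neg hx, mul_zero]
  have hv₀0 : v₀ ≠ 0 := by
    intro h
    have h1 := congrFun h 1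
    have h2 : v₀ 1 = (((χ ⟨1, A.one_mem⟩ : ℂˣ) : ℂ))⁻¹ := dif_pos A.one_mem
    rw [show (⟨1, A.one_mem⟩ : A) = 1 from Subtype.ext rfl, map_one] at h2
    simp only [h2] at h1
    norm_num at h1
  exact key (finrank ℂ (B → ℂ)) (B → ℂ) (regRep B) le_rfl
    ((Submodule.ne_bot_iff _).mpr ⟨v₀, hv₀mem, hv₀0⟩)
end Aux2



lemma dualSep (G : Type) [CommGroup G] [Finite G] {a : G} (ha : a ≠ 1) :
    ∃ φ : G →* ℂˣ, φ a ≠ 1 := by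
  have : NeZero ((Monoid.exponent G : ℕ) : ℂ) := by
    refine ⟨?_⟩
    exact_mod_cast Nat.cast_ne_zero.mpr (Monoid.exponent_ne_zero_of_finite)
  exact CommGroup.exists_apply_ne_one_of_hasEnoughRootsOfUnity G ℂ ha


/-- Let `B` be a finite group which is an extension of a finite abelian group `C = B⧸A`
by a finite abelian normal subgroup `A`.  Every irreducible complex representation of
`B` restricts to `A` with all irreducible constituents (characters of `A`) of
multiplicity at most one if and only if the extension has trivial commutator:
for all `c₁, c₂ ∈ C` the commutator of lifts vanishes in the coinvariants
`A_{⟨c₁,c₂⟩}`. -/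
theorem multiplicity_one_iff_trivial_commutator
    {B : Type} [Group B] [Finite B] (A : Subgroup B) [A.Normal]
    (hA : ∀ x ∈ A, ∀ y ∈ A, x * y = y * x)
    (hC : ∀ x y : B, x * y * x⁻¹ * y⁻¹ ∈ A) :
    (∀ (V : Type) (_ : AddCommGroup V) (_ : Module ℂ V) (_ : FiniteDimensional ℂ V)
        (π : Representation ℂ B V), IsIrred π →
        ∀ χ : A →* ℂˣ, finrank ℂ (charEigenspace π A χ) ≤ 1) ↔
    (∀ b₁ b₂ : B, b₁ * b₂ * b₁⁻¹ * b₂⁻¹ ∈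
        coinvariantDifferences A (QuotientGroup.mk b₁) (QuotientGroup.mk b₂)) := by
  constructor
  · intro hL b₁ b₂
    by_contra hknotin
    have hkA : b₁ * b₂ * b₁⁻¹ * b₂⁻¹ ∈ A := hC b₁ b₂
    letI cg : CommGroup ↥A :=
      { (inferInstance : Group ↥A) with
        mul_comm := fun x y => Subtype.ext (hA ↑x x.2 ↑y y.2) }
    set D := coinvariantDifferences A (QuotientGroup.mk b₁) (QuotientGroup.mk b₂) with hD
    let D' : Subgroup ↥A := D.subgroupOf A
    haveI : D'.Normal := D'.normal_of_comm
    haveI : Finite (↥A ⧸ D') := Quotient.finite _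
    have hmkne : (QuotientGroup.mk (⟨b₁ * b₂ * b₁⁻¹ * b₂⁻¹, hkA⟩ : ↥A) : ↥A ⧸ D') ≠ 1 := by
      intro h
      apply hknotin
      have h2 := (QuotientGroup.eq_one_iff _).mp h
      rwa [Subgroup.mem_subgroupOf] at h2
    obtain ⟨ψ, hψ⟩ := dualSep (↥A ⧸ D') hmkne
    let χ : A →* ℂˣ := ψ.comp (QuotientGroup.mk' D')
    have hgen : ∀ (a : ↥A) (b : B), (QuotientGroup.mk b : B ⧸ A) ∈
        Subgroup.closure {(QuotientGroup.mk b₁ : B ⧸ A), QuotientGroup.mk b₂} →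
        ∀ h : b * ↑a * b⁻¹ ∈ A, χ ⟨b * ↑a * b⁻¹, h⟩ = χ a := by
      intro a b hb h
      have hel : (↑a : B) * (b * ↑a * b⁻¹)⁻¹ ∈ D := by
        apply Subgroup.subset_closure
        exact ⟨↑a, b, a.2, hb, rfl⟩
      have hel' : (a * (⟨b * ↑a * b⁻¹, h⟩ : ↥A)⁻¹ : ↥A) ∈ D' := by
        rw [Subgroup.mem_subgroupOf]
        exact hel
      have h1 : χ (a * (⟨b * ↑a * b⁻¹, h⟩ : ↥A)⁻¹) = 1 := by
        show ψ (QuotientGroup.mk' D' _) = 1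
        rw [QuotientGroup.mk'_apply, (QuotientGroup.eq_one_iff _).mpr hel', map_one]
      rw [map_mul, map_inv] at h1
      exact (mul_inv_eq_one.mp h1).symm
    have hfix : ∀ b₀ : B, (QuotientGroup.mk b₀ : B ⧸ A) ∈
        Subgroup.closure {(QuotientGroup.mk b₁ : B ⧸ A), QuotientGroup.mk b₂} →
        b₀ ∈ fixSubgroup χ := by
      intro b₀ hb₀ a
      have hbinv : (QuotientGroup.mk b₀⁻¹ : B ⧸ A) ∈
          Subgroup.closure {(QuotientGroup.mk b₁ : B ⧸ A), QuotientGroup.mk b₂} := by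
        have h5 := Subgroup.inv_mem _ hb₀
        rwa [← QuotientGroup.mk_inv] at h5
      have hmem2 : b₀⁻¹ * ↑a * (b₀⁻¹)⁻¹ ∈ A := by
        have e : b₀⁻¹ * ↑a * (b₀⁻¹)⁻¹ = b₀⁻¹ * ↑a * b₀ := by group
        rw [e]; exact conj_mem' a b₀
      have h := hgen a b₀⁻¹ hbinv hmem2
      calc χ ⟨b₀⁻¹ * ↑a * b₀, conj_mem' a b₀⟩
          = χ ⟨b₀⁻¹ * ↑a * (b₀⁻¹)⁻¹, hmem2⟩ :=
            congrArg χ (Subtype.ext (by show b₀⁻¹ * ↑a * b₀ = b₀⁻¹ * ↑a * (b₀⁻¹)⁻¹; group))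
        _ = χ a := h
    have hfix₁ : b₁ ∈ fixSubgroup χ :=
      hfix b₁ (Subgroup.subset_closure (Set.mem_insert _ _))
    have hfix₂ : b₂ ∈ fixSubgroup χ :=
      hfix b₂ (Subgroup.subset_closure (Set.mem_insert_of_mem _ rfl))
    have hstar := star_of_mult hL χ b₁ b₂ hfix₁ hfix₂ hkA
    exact hψ hstar
  · intro hR V iV iM iF π hπ χ
    refine mult_le_one_of_star ?_ hC π hπ χ
    intro χ' b₁ b₂ hb₁ hb₂ hkA
    have hDK : coinvariantDifferences A (QuotientGroup.mk b₁) (QuotientGroup.mk b₂)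
        ≤ (χ'.ker).map A.subtype := by
      apply (Subgroup.closure_le _).mpr
      rintro x ⟨a, b, ha, hbmem, rfl⟩
      have hbfix : b ∈ fixSubgroup χ' := by
        have hle : Subgroup.closure {(QuotientGroup.mk b₁ : B ⧸ A), QuotientGroup.mk b₂}
            ≤ Subgroup.map (QuotientGroup.mk' A) (fixSubgroup χ') := by
          apply (Subgroup.closure_le _).mpr
          intro y hy
          simp only [Set.mem_insert_iff, Set.mem_singleton_iff] at hy
          rcases hy with rfl | rfl
          · exact ⟨b₁, hb₁, rfl⟩
          · exact ⟨b₂, hb₂, rfl⟩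
        obtain ⟨t, ht, hte⟩ := hle hbmem
        have hte' : (QuotientGroup.mk t : B ⧸ A) = QuotientGroup.mk b := hte
        have htb : t⁻¹ * b ∈ A := QuotientGroup.eq.mp hte'
        have he : b = t * (t⁻¹ * b) := by group
        rw [he]
        exact Subgroup.mul_mem _ ht (A_le_fixSubgroup hA χ' htb)
      have hconjA : b * a * b⁻¹ ∈ A := (inferInstance : A.Normal).conj_mem a ha b
      refine ⟨(⟨a, ha⟩ : ↥A) * (⟨b * a * b⁻¹, hconjA⟩ : ↥A)⁻¹, ?_, rfl⟩
      show (⟨a, ha⟩ : ↥A) * (⟨b * a * b⁻¹, hconjA⟩ : ↥A)⁻¹ ∈ χ'.ker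
      rw [MonoidHom.mem_ker, map_mul, map_inv]
      have hcc : χ' ⟨b * a * b⁻¹, hconjA⟩ = χ' ⟨a, ha⟩ := fix_conj χ' hbfix ⟨a, ha⟩ hconjA
      rw [hcc, mul_inv_cancel]
    obtain ⟨z, hz, hze⟩ := hDK (hR b₁ b₂)
    have hez : (⟨b₁ * b₂ * b₁⁻¹ * b₂⁻¹, hkA⟩ : ↥A) = z := Subtype.ext hze.symm
    rw [hez]
    have hz' : z ∈ χ'.ker := hz
    exact MonoidHom.mem_ker.mp hz'
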